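/- Let C, D be 2×2 complex matrices such that CD* is self-adjoint and det(CC* + DD*) ≠ 0. Let M be a 2×2 complex matrix with positive definite imaginary part, i.e., (M − M*)/(2i) > 0. Then the matrix DM − C is invertible. -/

import Mathlib

open Complex Matrix
open scoped ComplexOrder

lemma dot_conjT (A : Matrix (Fin 2) (Fin 2) ℂ) (x y : Fin 2 → ℂ) :
    star x ⬝ᵥ A.mulVec y = star (Aᴴ.mulVec x) ⬝ᵥ y := by
  rw [dotProduct_mulVec, star_mulVec, conjTranspose_conjTranspose]

lemma dot_swap (x y : Fin 2 → ℂ) : star x ⬝ᵥ y = star (star y ⬝ᵥ x) := by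
  rw [star_dotProduct]

/-- If `(C,D)` is an admissible pair (`CD*` self-adjoint and
`det(CC* + DD*) ≠ 0`) and `M` is a `2×2` matrix with positive definite imaginary
part `(M - M*)/(2i)`, then `DM - C` is invertible. -/
theorem stmt5 (C D M : Matrix (Fin 2) (Fin 2) ℂ)
    (hCD : (C * Dᴴ).IsHermitian)
    (hdet : (C * Cᴴ + D * Dᴴ).det ≠ 0)
    (hM : (((2 : ℂ) * I)⁻¹ • (M - Mᴴ)).PosDef) :
    IsUnit (D * M - C) := by
  rw [Matrix.isUnit_iff_isUnit_det, isUnit_iff_ne_zero]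
  intro hA
  -- det of adjoint is zero too
  have hAH : ((D * M - C)ᴴ).det = 0 := by
    rw [det_conjTranspose, hA, star_zero]
  obtain ⟨v, hv0, hv⟩ := Matrix.exists_mulVec_eq_zero_iff.mpr hAH
  -- set u = Dᴴ v, w = Cᴴ v; then Mᴴ u = w
  set u : Fin 2 → ℂ := Dᴴ.mulVec v with hu
  set w : Fin 2 → ℂ := Cᴴ.mulVec v with hw
  have hMw : Mᴴ.mulVec u = w := by
    have := hv
    rw [conjTranspose_sub, conjTranspose_mul, sub_mulVec, sub_eq_zero] at this
    rw [hu, hw, mulVec_mulVec] at *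
    exact this
  -- s = star u ⬝ᵥ M u ; show s = conj s
  set s : ℂ := star u ⬝ᵥ M.mulVec u with hs
  have h1 : star u ⬝ᵥ w = star s := by
    rw [← hMw, dot_conjT, conjTranspose_conjTranspose, hs, dot_swap]
  have h2 : star w ⬝ᵥ u = s := by
    rw [dot_swap, h1, star_star]
  -- from hermitianity of C Dᴴ : star w ⬝ᵥ u = star u ⬝ᵥ w
  have h3 : star w ⬝ᵥ u = star u ⬝ᵥ w := by
    have hE : D * Cᴴ = C * Dᴴ := by
      calc D * Cᴴ = (C * Dᴴ)ᴴ := by rw [conjTranspose_mul, conjTranspose_conjTranspose]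
        _ = C * Dᴴ := hCD
    have hC : star w ⬝ᵥ u = star v ⬝ᵥ (C * Dᴴ).mulVec v := by
      rw [hw, hu, ← dot_conjT, mulVec_mulVec]
    have hD : star u ⬝ᵥ w = star v ⬝ᵥ (D * Cᴴ).mulVec v := by
      rw [hw, hu, ← dot_conjT, mulVec_mulVec]
    rw [hC, hD, hE]
  have hss : s = star s := by
    rw [← h1, ← h3]; exact h2.symm
  -- hence star u ⬝ᵥ (M - Mᴴ) u = 0, so u = 0 by PosDef
  have hu0 : u = 0 := by
    by_contra hune
    have hpos := hM.dotProduct_mulVec_pos hune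
    have : star u ⬝ᵥ (((2 : ℂ) * I)⁻¹ • (M - Mᴴ)).mulVec u = 0 := by
      rw [smul_mulVec, dotProduct_smul]
      have : star u ⬝ᵥ (M - Mᴴ).mulVec u = 0 := by
        rw [sub_mulVec, dotProduct_sub, ← hs, hMw, h1, ← hss, sub_self]
      rw [this, smul_zero]
    rw [this] at hpos
    exact lt_irrefl 0 hpos
  have hw0 : w = 0 := by rw [← hMw, hu0, mulVec_zero]
  -- then (C Cᴴ + D Dᴴ) v = 0, contradicting det ≠ 0
  apply hdet
  rw [← Matrix.exists_mulVec_eq_zero_iff]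
  refine ⟨v, hv0, ?_⟩
  rw [add_mulVec, ← mulVec_mulVec, ← mulVec_mulVec, ← hu, ← hw, hu0, hw0,
    mulVec_zero, mulVec_zero, add_zero]
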